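/- For every even positive integer a, the maximum number of triples in a packing on an a-element set (a family of 3-element subsets in which every pair of elements is contained in at most one triple) equals floor((a/3)·floor((a-1)/2)). -/

import Mathlib

open Finset

/-- `T` is a family of 3-element subsets of `A`. -/
def IsTripleFamily {α : Type*} [DecidableEq α] (A : Finset α) (T : Finset (Finset α)) : Prop :=
  ∀ t ∈ T, t ⊆ A ∧ t.card = 3

/-- The 2-element subsets of `A` not contained in any member of `T`. -/
def uncoveredPairs {α : Type*} [DecidableEq α] (A : Finset α) (T : Finset (Finset α)) :
    Finset (Finset α) :=
  (A.powersetCard 2).filter fun p => ∀ t ∈ T, ¬ p ⊆ t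

/-- The weight of a triple family: number of triples plus half the number of uncovered pairs. -/
def weight {α : Type*} [DecidableEq α] (A : Finset α) (T : Finset (Finset α)) : ℚ :=
  T.card + (uncoveredPairs A T).card / 2

/-- `C_*(a)`: the minimum weight of a triple family on an `a`-element set
(computed as half the minimum of the doubled weights, which are natural numbers). -/
noncomputable def Cstar2 (a : ℕ) : ℕ :=
  sInf {n : ℕ | ∃ T : Finset (Finset ℕ), IsTripleFamily (Finset.range a) T ∧
      2 * T.card + (uncoveredPairs (Finset.range a) T).card = n}

noncomputable def Cstar (a : ℕ) : ℚ := (Cstar2 a : ℚ) / 2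

/-- `T` is a covering of the pairs of `A` by triples. -/
def IsCover {α : Type*} [DecidableEq α] (A : Finset α) (T : Finset (Finset α)) : Prop :=
  IsTripleFamily A T ∧ ∀ p ⊆ A, p.card = 2 → ∃ t ∈ T, p ⊆ t

/-- `C(a) = C(a,3,2)`: the minimum size of a covering of pairs by triples on `a` elements. -/
noncomputable def coverNum (a : ℕ) : ℕ :=
  sInf {n | ∃ T : Finset (Finset ℕ), IsCover (Finset.range a) T ∧ T.card = n}

/-- An `(A,B)`-system: a family of 4-element subsets of `A ∪ B` covering every
3-element subset with at least two elements in `A`. -/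
def IsABSystem {α : Type*} [DecidableEq α] (A B : Finset α) (Q : Finset (Finset α)) : Prop :=
  (∀ q ∈ Q, q ⊆ A ∪ B ∧ q.card = 4) ∧
  ∀ T ⊆ A ∪ B, T.card = 3 → 2 ≤ (T ∩ A).card → ∃ q ∈ Q, T ⊆ q

/-- `f(a,b)`: the minimum size of an `(A,B)`-system with `|A| = a`, `|B| = b`. -/
noncomputable def fAB (a b : ℕ) : ℕ :=
  sInf {n | ∃ Q : Finset (Finset ℕ),
    IsABSystem (Finset.range a) (Finset.Ico a (a + b)) Q ∧ Q.card = n}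


/-- A packing: a family of triples of `A` in which every pair lies in at most one triple. -/
def IsPacking {α : Type*} [DecidableEq α] (A : Finset α) (T : Finset (Finset α)) : Prop :=
  IsTripleFamily A T ∧ ∀ p ⊆ A, p.card = 2 → (T.filter fun t => p ⊆ t).card ≤ 1

set_option linter.unusedSectionVars false
set_option linter.unreachableTactic false
set_option linter.unusedTactic false

def GoodFam {α : Type*} [DecidableEq α] (A : Finset α) (T : Finset (Finset α)) : Prop :=
  (∀ t ∈ T, t ⊆ A ∧ t.card = 3) ∧ ∀ t ∈ T, ∀ t' ∈ T, t ≠ t' → (t ∩ t').card ≤ 1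

lemma GoodFam.isPacking {α : Type*} [DecidableEq α] {A : Finset α} {T : Finset (Finset α)}
    (h : GoodFam A T) : IsPacking A T := by
  refine ⟨h.1, fun p hp hp2 => ?_⟩
  rw [Finset.card_le_one]
  intro t ht t' ht'
  simp only [mem_filter] at ht ht'
  by_contra hne
  have h1 := h.2 t ht.1 t' ht'.1 hne
  have h2 : p ⊆ t ∩ t' := subset_inter ht.2 ht'.2
  have h3 := card_le_card h2
  omega

lemma GoodFam.imageOn {α β : Type*} [DecidableEq α] [DecidableEq β] {A : Finset α}
    {T : Finset (Finset α)} (h : GoodFam A T) {φ : α → β} (hφ : Set.InjOn φ A) :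
    GoodFam (A.image φ) (T.image (fun t => t.image φ)) ∧
      (T.image (fun t => t.image φ)).card = T.card := by
  have himg : ∀ t ∈ T, ∀ t' ∈ T, t.image φ = t'.image φ → t = t' := by
    intro t ht t' ht' he
    ext x
    constructor
    · intro hx
      have : φ x ∈ t'.image φ := he ▸ mem_image_of_mem φ hx
      obtain ⟨y, hy, hyx⟩ := mem_image.mp this
      have := hφ ((h.1 t' ht').1 hy) ((h.1 t ht).1 hx) hyx
      rwa [← this]
    · intro hx
      have : φ x ∈ t.image φ := he ▸ mem_image_of_mem φ hx
      obtain ⟨y, hy, hyx⟩ := mem_image.mp this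
      have := hφ ((h.1 t ht).1 hy) ((h.1 t' ht').1 hx) hyx
      rwa [← this]
  refine ⟨⟨?_, ?_⟩, ?_⟩
  · intro t ht
    simp only [mem_image] at ht
    obtain ⟨s, hs, rfl⟩ := ht
    refine ⟨image_subset_image (h.1 s hs).1, ?_⟩
    rw [card_image_of_injOn (hφ.mono (by exact_mod_cast (h.1 s hs).1)), (h.1 s hs).2]
  · intro t ht t' ht' hne
    simp only [mem_image] at ht ht'
    obtain ⟨s, hs, rfl⟩ := ht
    obtain ⟨s', hs', rfl⟩ := ht'
    have hss : s ≠ s' := fun he => hne (by rw [he])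
    have hsub : (↑s ∪ ↑s' : Set α) ⊆ ↑A := by
      rintro x (hx | hx)
      · exact (h.1 s hs).1 hx
      · exact (h.1 s' hs').1 hx
    rw [← Finset.image_inter_of_injOn _ _ (hφ.mono hsub),
      card_image_of_injOn (hφ.mono (fun x hx => (h.1 s hs).1 (mem_of_mem_inter_left (by exact_mod_cast hx))))]
    exact h.2 s hs s' hs' hss
  · exact card_image_of_injOn (fun t ht t' ht' => himg t ht t' ht')

lemma GoodFam.toRange {A : Finset ℕ} {T : Finset (Finset ℕ)} {a : ℕ}
    (h : GoodFam A T) (hA : A.card = a) :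
    ∃ T' : Finset (Finset ℕ), GoodFam (Finset.range a) T' ∧ T'.card = T.card := by
  classical
  set L := A.sort (· ≤ ·) with hL
  set φ : ℕ → ℕ := fun x => L.idxOf x with hφdef
  have hmem : ∀ x, x ∈ A → x ∈ L := fun x hx => (Finset.mem_sort _).mpr hx
  have hφA : ∀ x ∈ A, φ x < a := by
    intro x hx
    have := List.idxOf_lt_length_iff.mpr (hmem x hx)
    rwa [Finset.length_sort, hA] at this
  have hinjOn : Set.InjOn φ A := by
    intro x hx y hy hxy
    exact (List.idxOf_inj (hmem x hx)).mp hxy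
  obtain ⟨hg, hc⟩ := h.imageOn hinjOn
  refine ⟨T.image (fun t => t.image φ), ?_, hc⟩
  have himg : A.image φ = Finset.range a := by
    apply Finset.eq_of_subset_of_card_le
    · intro y hy
      simp only [mem_image] at hy
      obtain ⟨x, hx, rfl⟩ := hy
      exact mem_range.mpr (hφA x hx)
    · rw [card_image_of_injOn hinjOn, hA, card_range]
  rwa [himg] at hg

lemma packing_card_le {a : ℕ} {T : Finset (Finset ℕ)} (h : IsPacking (Finset.range a) T) :
    T.card ≤ a * ((a - 1) / 2) / 3 := by
  classical
  have hdeg : ∀ v ∈ Finset.range a, (T.filter fun t => v ∈ t).card ≤ (a - 1) / 2 := by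
    intro v hv
    set D := T.filter fun t => v ∈ t with hD
    have hdisj : ∀ t ∈ D, ∀ t' ∈ D, t ≠ t' → Disjoint (t.erase v) (t'.erase v) := by
      intro t ht t' ht' hne
      rw [Finset.disjoint_left]
      intro w hw hw'
      have hwv : w ≠ v := (Finset.mem_erase.mp hw).1
      simp only [hD, mem_filter] at ht ht'
      have hwt : w ∈ t := Finset.mem_of_mem_erase hw
      have hwt' : w ∈ t' := Finset.mem_of_mem_erase hw'
      have hsub : ({v, w} : Finset ℕ) ⊆ Finset.range a := by
        intro x hx
        simp only [Finset.mem_insert, Finset.mem_singleton] at hx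
        rcases hx with rfl | rfl
        · exact hv
        · exact (h.1 t ht.1).1 hwt
      have hcard : ({v, w} : Finset ℕ).card = 2 := by
        rw [Finset.card_insert_of_notMem (by simpa using hwv.symm), Finset.card_singleton]
      have hle := h.2 _ hsub hcard
      have hvw_t : ({v, w} : Finset ℕ) ⊆ t := by
        intro x hx
        simp only [Finset.mem_insert, Finset.mem_singleton] at hx
        rcases hx with rfl | rfl
        exacts [ht.2, hwt]
      have hvw_t' : ({v, w} : Finset ℕ) ⊆ t' := by
        intro x hx
        simp only [Finset.mem_insert, Finset.mem_singleton] at hx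
        rcases hx with rfl | rfl
        exacts [ht'.2, hwt']
      have htm : t ∈ T.filter fun s => ({v, w} : Finset ℕ) ⊆ s :=
        mem_filter.mpr ⟨ht.1, hvw_t⟩
      have htm' : t' ∈ T.filter fun s => ({v, w} : Finset ℕ) ⊆ s :=
        mem_filter.mpr ⟨ht'.1, hvw_t'⟩
      have h2 := Finset.one_lt_card.mpr ⟨t, htm, t', htm', hne⟩
      omega
    have hU : (D.biUnion fun t => t.erase v) ⊆ (Finset.range a).erase v := by
      intro w hw
      simp only [Finset.mem_biUnion] at hw
      obtain ⟨t, ht, hwt⟩ := hw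
      simp only [hD, mem_filter] at ht
      exact Finset.mem_erase.mpr ⟨(Finset.mem_erase.mp hwt).1,
        (h.1 t ht.1).1 (Finset.mem_of_mem_erase hwt)⟩
    have hcardU : (D.biUnion fun t => t.erase v).card = 2 * D.card := by
      rw [Finset.card_biUnion hdisj]
      have h3 : ∀ t ∈ D, (t.erase v).card = 2 := by
        intro t ht
        simp only [hD, mem_filter] at ht
        rw [Finset.card_erase_of_mem ht.2, (h.1 t ht.1).2]
      rw [Finset.sum_congr rfl h3, Finset.sum_const, smul_eq_mul]
      ring
    have h1 := Finset.card_le_card hU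
    rw [hcardU, Finset.card_erase_of_mem hv, Finset.card_range] at h1
    omega
  have hsum : ∑ v ∈ Finset.range a, (T.filter fun t => v ∈ t).card = 3 * T.card := by
    have h1 : ∀ v, (T.filter fun t => v ∈ t).card = ∑ t ∈ T, if v ∈ t then 1 else 0 := by
      intro v; rw [Finset.card_filter]
    simp only [h1]
    rw [Finset.sum_comm]
    have h2 : ∀ t ∈ T, (∑ v ∈ Finset.range a, if v ∈ t then 1 else 0) = 3 := by
      intro t ht
      rw [← Finset.card_filter]
      have h4 : (Finset.range a).filter (fun v => v ∈ t) = t := by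
        rw [Finset.filter_mem_eq_inter, Finset.inter_eq_right.mpr (h.1 t ht).1]
      rw [h4, (h.1 t ht).2]
    rw [Finset.sum_congr rfl h2, Finset.sum_const, smul_eq_mul, mul_comm]
  have hle : 3 * T.card ≤ a * ((a - 1) / 2) := by
    rw [← hsum]
    calc ∑ v ∈ Finset.range a, (T.filter fun t => v ∈ t).card
        ≤ ∑ _v ∈ Finset.range a, (a - 1) / 2 := Finset.sum_le_sum hdeg
      _ = a * ((a - 1) / 2) := by rw [Finset.sum_const, smul_eq_mul, Finset.card_range]
  rw [Nat.le_div_iff_mul_le (by norm_num)]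
  omega




section Core
variable {n : ℕ}

def t3 (G : ZMod n → ZMod n) (i j : ZMod n) (l : ZMod 3) : Finset (ZMod n × ZMod 3) :=
  {(i, l), (j, l), (G (i + j), l + 1)}

def t1 (i : ZMod n) : Finset (ZMod n × ZMod 3) := {(i, 0), (i, 1), (i, 2)}

lemma mem_t3 {G : ZMod n → ZMod n} {i j : ZMod n} {l : ZMod 3} {p : ZMod n × ZMod 3} :
    p ∈ t3 G i j l ↔ p = (i, l) ∨ p = (j, l) ∨ p = (G (i + j), l + 1) := by
  simp [t3]

lemma mem_t1 {i : ZMod n} {p : ZMod n × ZMod 3} :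
    p ∈ t1 i ↔ p = (i, 0) ∨ p = (i, 1) ∨ p = (i, 2) := by
  simp [t1]

lemma zmod3_cases : ∀ l : ZMod 3, l = 0 ∨ l = 1 ∨ l = 2 := by decide
lemma zmod3_tri : ∀ l l' : ZMod 3, l' = l ∨ l' = l + 1 ∨ l' = l + 2 := by decide
lemma zmod3_ne1 : ∀ l : ZMod 3, l + 1 ≠ l := by decide
lemma zmod3_ne2 : ∀ l : ZMod 3, l + 2 ≠ l := by decide
lemma zmod3_ne12 : ∀ l : ZMod 3, l + 1 ≠ l + 2 := by decide

lemma card_t3 {G : ZMod n → ZMod n} {i j : ZMod n} {l : ZMod 3} (hij : i ≠ j) :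
    (t3 G i j l).card = 3 := by
  rw [t3, card_insert_of_notMem, card_insert_of_notMem, card_singleton]
  · simp only [mem_singleton, Prod.mk.injEq, not_and]
    intro _; exact (zmod3_ne1 l).symm
  · simp only [mem_insert, mem_singleton, Prod.mk.injEq, not_or, not_and]
    exact ⟨fun h => absurd h hij, fun _ => (zmod3_ne1 l).symm⟩

lemma card_t1 {i : ZMod n} : (t1 i).card = 3 := by
  have h01 : (0 : ZMod 3) ≠ 1 := by decide
  have h02 : (0 : ZMod 3) ≠ 2 := by decide
  have h12 : (1 : ZMod 3) ≠ 2 := by decide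
  rw [t1, card_insert_of_notMem, card_insert_of_notMem, card_singleton]
  · simp only [mem_singleton, Prod.mk.injEq, not_and]
    exact fun _ => h12
  · simp only [mem_insert, mem_singleton, Prod.mk.injEq, not_or, not_and]
    exact ⟨fun _ => h01, fun _ => h02⟩

variable [NeZero n]

lemma base_sum {i j i' j' x : ZMod n} (hij : i.val < j.val) (hij' : i'.val < j'.val)
    (hx : x = i ∨ x = j) (hx' : x = i' ∨ x = j') (hsum : i + j = i' + j') :
    i = i' ∧ j = j' := by
  rcases hx with h1 | h1 <;> rcases hx' with h2 | h2
  · have e : i = i' := h1.symm.trans h2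
    refine ⟨e, ?_⟩
    rw [e] at hsum
    exact add_left_cancel hsum
  · exfalso
    have e : i = j' := h1.symm.trans h2
    have h3 : i + j = i + i' := by rw [hsum, ← e]; ring
    have hji : j = i' := add_left_cancel h3
    have := congrArg ZMod.val e
    have := congrArg ZMod.val hji
    omega
  · exfalso
    have e : j = i' := h1.symm.trans h2
    have h3 : j + i = j + j' := by rw [add_comm j i, hsum, ← e]
    have hij2 : i = j' := add_left_cancel h3
    have := congrArg ZMod.val e
    have := congrArg ZMod.val hij2
    omega
  · have e : j = j' := h1.symm.trans h2
    refine ⟨?_, e⟩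
    rw [← e] at hsum
    exact add_right_cancel hsum

lemma t3_inter_same {G : ZMod n → ZMod n} (hG : Function.Injective G) {i j i' j' : ZMod n}
    {l : ZMod 3} (hij : i.val < j.val) (hij' : i'.val < j'.val)
    (hne : (i, j) ≠ (i', j')) :
    (t3 G i j l ∩ t3 G i' j' l).card ≤ 1 := by
  rw [card_le_one]
  intro p hp q hq
  by_contra hpq
  apply hne
  rw [mem_inter, mem_t3, mem_t3] at hp hq
  have hB : ∀ r : ZMod n × ZMod 3,
      (r = (i, l) ∨ r = (j, l) ∨ r = (G (i + j), l + 1)) →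
      (r = (i', l) ∨ r = (j', l) ∨ r = (G (i' + j'), l + 1)) →
      r.2 = l →
      (r.1 = i ∨ r.1 = j) ∧ (r.1 = i' ∨ r.1 = j') := by
    intro r h1 h2 hcol
    constructor
    · rcases h1 with h1 | h1 | h1 <;> rw [h1]
      · exact Or.inl rfl
      · exact Or.inr rfl
      · exact absurd (by rw [h1] at hcol; exact hcol) (zmod3_ne1 l)
    · rcases h2 with h2 | h2 | h2 <;> rw [h2]
      · exact Or.inl rfl
      · exact Or.inr rfl
      · exact absurd (by rw [h2] at hcol; exact hcol) (zmod3_ne1 l)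
  have hT : ∀ r : ZMod n × ZMod 3,
      (r = (i, l) ∨ r = (j, l) ∨ r = (G (i + j), l + 1)) →
      (r = (i', l) ∨ r = (j', l) ∨ r = (G (i' + j'), l + 1)) →
      r.2 ≠ l →
      r = (G (i + j), l + 1) ∧ i + j = i' + j' := by
    intro r h1 h2 hcol
    have e1 : r = (G (i + j), l + 1) := by
      rcases h1 with h1 | h1 | h1
      · exact absurd (by rw [h1]) hcol
      · exact absurd (by rw [h1]) hcol
      · exact h1
    refine ⟨e1, ?_⟩
    rcases h2 with h2 | h2 | h2
    · exact absurd (by rw [h2]) hcol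
    · exact absurd (by rw [h2]) hcol
    · have := e1.symm.trans h2
      simp only [Prod.mk.injEq] at this
      exact hG this.1
  have key : i = i' ∧ j = j' := by
    by_cases hpl : p.2 = l <;> by_cases hql : q.2 = l
    · have hp' := hB p hp.1 hp.2 hpl
      have hq' := hB q hq.1 hq.2 hql
      have h1q : p.1 ≠ q.1 := fun h => hpq (Prod.ext h (hpl.trans hql.symm))
      rcases hp'.1 with e1 | e1 <;> rcases hq'.1 with e2 | e2
      · exact absurd (e1.trans e2.symm) h1q
      · rcases hp'.2 with f1 | f1 <;> rcases hq'.2 with f2 | f2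
        · exact absurd (f1.trans f2.symm) h1q
        · exact ⟨e1.symm.trans f1, e2.symm.trans f2⟩
        · exfalso
          have g1 := congrArg ZMod.val (e1.symm.trans f1)
          have g2 := congrArg ZMod.val (e2.symm.trans f2)
          omega
        · exact absurd (f1.trans f2.symm) h1q
      · rcases hp'.2 with f1 | f1 <;> rcases hq'.2 with f2 | f2
        · exact absurd (f1.trans f2.symm) h1q
        · exfalso
          have g1 := congrArg ZMod.val (e1.symm.trans f1)
          have g2 := congrArg ZMod.val (e2.symm.trans f2)
          omega
        · exact ⟨e2.symm.trans f2, e1.symm.trans f1⟩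
        · exact absurd (f1.trans f2.symm) h1q
      · exact absurd (e1.trans e2.symm) h1q
    · have hq' := hT q hq.1 hq.2 hql
      have hp' := hB p hp.1 hp.2 hpl
      exact base_sum hij hij' hp'.1 hp'.2 hq'.2
    · have hp' := hT p hp.1 hp.2 hpl
      have hq' := hB q hq.1 hq.2 hql
      exact base_sum hij hij' hq'.1 hq'.2 hp'.2
    · have hp' := hT p hp.1 hp.2 hpl
      have hq' := hT q hq.1 hq.2 hql
      exact absurd (hp'.1.trans hq'.1.symm) hpq
  rw [key.1, key.2]

lemma t3_inter_succ {G : ZMod n → ZMod n} {i j i' j' : ZMod n} {l : ZMod 3} :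
    (t3 G i j l ∩ t3 G i' j' (l + 1)).card ≤ 1 := by
  rw [card_le_one]
  intro p hp q hq
  rw [mem_inter, mem_t3, mem_t3] at hp hq
  have key : ∀ r : ZMod n × ZMod 3,
      (r = (i, l) ∨ r = (j, l) ∨ r = (G (i + j), l + 1)) →
      (r = (i', l + 1) ∨ r = (j', l + 1) ∨ r = (G (i' + j'), l + 1 + 1)) →
      r = (G (i + j), l + 1) := by
    intro r h1 h2
    rcases h1 with h1 | h1 | h1
    · exfalso
      rcases h2 with h2 | h2 | h2 <;> have := (h1.symm.trans h2) <;>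
        simp only [Prod.mk.injEq] at this
      · exact (zmod3_ne1 l) this.2.symm
      · exact (zmod3_ne1 l) this.2.symm
      · exact (zmod3_ne2 l) (by linear_combination this.2.symm)
    · exfalso
      rcases h2 with h2 | h2 | h2 <;> have := (h1.symm.trans h2) <;>
        simp only [Prod.mk.injEq] at this
      · exact (zmod3_ne1 l) this.2.symm
      · exact (zmod3_ne1 l) this.2.symm
      · exact (zmod3_ne2 l) (by linear_combination this.2.symm)
    · exact h1
  rw [key p hp.1 hp.2, key q hq.1 hq.2]

lemma t3_inter_succ2 {G : ZMod n → ZMod n} {i j i' j' : ZMod n} {l : ZMod 3} :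
    (t3 G i j l ∩ t3 G i' j' (l + 2)).card ≤ 1 := by
  rw [card_le_one]
  intro p hp q hq
  rw [mem_inter, mem_t3, mem_t3] at hp hq
  have key : ∀ r : ZMod n × ZMod 3,
      (r = (i, l) ∨ r = (j, l) ∨ r = (G (i + j), l + 1)) →
      (r = (i', l + 2) ∨ r = (j', l + 2) ∨ r = (G (i' + j'), l + 2 + 1)) →
      r = (G (i' + j'), l + 2 + 1) := by
    intro r h1 h2
    rcases h2 with h2 | h2 | h2
    · exfalso
      rcases h1 with h1 | h1 | h1 <;> have := (h1.symm.trans h2) <;>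
        simp only [Prod.mk.injEq] at this
      · exact (zmod3_ne2 l) this.2.symm
      · exact (zmod3_ne2 l) this.2.symm
      · exact (zmod3_ne12 l) this.2
    · exfalso
      rcases h1 with h1 | h1 | h1 <;> have := (h1.symm.trans h2) <;>
        simp only [Prod.mk.injEq] at this
      · exact (zmod3_ne2 l) this.2.symm
      · exact (zmod3_ne2 l) this.2.symm
      · exact (zmod3_ne12 l) this.2
    · exact h2
  rw [key p hp.1 hp.2, key q hq.1 hq.2]

lemma t3_inter {G : ZMod n → ZMod n} (hG : Function.Injective G) {i j i' j' : ZMod n}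
    {l l' : ZMod 3} (hij : i.val < j.val) (hij' : i'.val < j'.val)
    (hne : (i, j, l) ≠ (i', j', l')) :
    (t3 G i j l ∩ t3 G i' j' l').card ≤ 1 := by
  rcases zmod3_tri l l' with h1 | h1 | h1 <;> rw [h1]
  · refine t3_inter_same hG hij hij' ?_
    intro h
    simp only [Prod.mk.injEq] at h
    exact hne (by rw [h.1, h.2, h1])
  · exact t3_inter_succ
  · exact t3_inter_succ2

lemma t3_param_eq {G : ZMod n → ZMod n} (hG : Function.Injective G) {i j i' j' : ZMod n}
    {l l' : ZMod 3} (hij : i.val < j.val) (hij' : i'.val < j'.val)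
    (he : t3 G i j l = t3 G i' j' l') : (i, j, l) = (i', j', l') := by
  by_contra hne
  have h1 := t3_inter hG hij hij' hne
  have hne' : i' ≠ j' := fun h => by simp [h] at hij'
  rw [he, inter_self, card_t3 hne'] at h1
  omega

lemma t1_ne_t3 {G : ZMod n → ZMod n} {m i j : ZMod n} {l : ZMod 3} :
    t1 m ≠ t3 G i j l := by
  intro he
  have h1 : (m, l + 2) ∈ t1 m := by
    rw [mem_t1]
    rcases zmod3_cases (l + 2) with h | h | h <;> rw [h]
    exacts [Or.inl rfl, Or.inr (Or.inl rfl), Or.inr (Or.inr rfl)]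
  rw [he, mem_t3] at h1
  rcases h1 with h | h | h <;> simp only [Prod.mk.injEq] at h
  · exact zmod3_ne2 l h.2
  · exact zmod3_ne2 l h.2
  · exact zmod3_ne12 l h.2.symm

lemma t1_inter_t3 {G : ZMod n → ZMod n} {m i j : ZMod n} {l : ZMod 3}
    (hij : i ≠ j) (hdiag : ∀ x, G (m + x) = m → x = m) :
    (t1 m ∩ t3 G i j l).card ≤ 1 := by
  rw [card_le_one]
  intro p hp q hq
  rw [mem_inter, mem_t1, mem_t3] at hp hq
  have hfst : ∀ r : ZMod n × ZMod 3,
      (r = (m, 0) ∨ r = (m, 1) ∨ r = (m, 2)) → r.1 = m := by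
    intro r h
    rcases h with h | h | h <;> rw [h]
  by_contra hpq
  have hpm := hfst p hp.1
  have hqm := hfst q hq.1
  rcases hp.2 with e1 | e1 | e1 <;> rcases hq.2 with e2 | e2 | e2
  · exact hpq (e1.trans e2.symm)
  · apply hij
    have h3 : i = m := by rw [← hpm, e1]
    have h4 : j = m := by rw [← hqm, e2]
    rw [h3, h4]
  · apply hij
    have him : i = m := by rw [← hpm, e1]
    have hgm : G (i + j) = m := by rw [← hqm, e2]
    rw [him] at hgm
    rw [him, hdiag j hgm]
  · apply hij
    have h3 : j = m := by rw [← hpm, e1]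
    have h4 : i = m := by rw [← hqm, e2]
    rw [h4, h3]
  · exact hpq (e1.trans e2.symm)
  · apply hij
    have hjm : j = m := by rw [← hpm, e1]
    have hgm : G (i + j) = m := by rw [← hqm, e2]
    rw [hjm, add_comm] at hgm
    rw [hjm, hdiag i hgm]
  · apply hij
    have him : i = m := by rw [← hqm, e2]
    have hgm : G (i + j) = m := by rw [← hpm, e1]
    rw [him] at hgm
    rw [him, hdiag j hgm]
  · apply hij
    have hjm : j = m := by rw [← hqm, e2]
    have hgm : G (i + j) = m := by rw [← hpm, e1]
    rw [hjm, add_comm] at hgm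
    rw [hjm, hdiag i hgm]
  · exact hpq (e1.trans e2.symm)

lemma t1_param_eq {i i' : ZMod n} (he : t1 i = t1 i') : i = i' := by
  have h1 : (i, 0) ∈ t1 i' := by rw [← he, mem_t1]; exact Or.inl rfl
  rw [mem_t1] at h1
  rcases h1 with h | h | h <;> simp only [Prod.mk.injEq] at h
  · exact h.1
  · exact absurd h.2 (by decide)
  · exact absurd h.2 (by decide)

lemma t1_inter_t1 {i i' : ZMod n} (hne : i ≠ i') : (t1 i ∩ t1 i').card ≤ 1 := by
  rw [card_le_one]
  intro p hp q hq
  exfalso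
  rw [mem_inter, mem_t1, mem_t1] at hp
  rcases hp.1 with h | h | h <;> rcases hp.2 with h' | h' | h' <;>
    have := h.symm.trans h' <;> simp only [Prod.mk.injEq] at this <;>
    first
      | exact hne this.1
      | exact absurd this.2 (by decide)

end Core



def ltPairs (n : ℕ) [NeZero n] : Finset (ZMod n × ZMod n) :=
  Finset.univ.filter fun x => x.1.val < x.2.val

lemma mem_ltPairs {n : ℕ} [NeZero n] {p : ZMod n × ZMod n} :
    p ∈ ltPairs n ↔ p.1.val < p.2.val := by
  simp [ltPairs]

lemma card_ltPairs (n : ℕ) [NeZero n] : (ltPairs n).card = n * (n - 1) / 2 := by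
  classical
  have hcards : (ltPairs n).card =
      (Finset.univ.filter fun x : ZMod n × ZMod n => x.2.val < x.1.val).card := by
    have himg : (Finset.univ.filter fun x : ZMod n × ZMod n => x.2.val < x.1.val)
        = (ltPairs n).image Prod.swap := by
      ext p
      simp only [ltPairs, mem_filter, mem_univ, true_and, mem_image]
      constructor
      · intro h
        exact ⟨p.swap, by simpa using h, by simp⟩
      · rintro ⟨q, hq, rfl⟩
        simpa using hq
    rw [himg, card_image_of_injective _ Prod.swap_injective]
  have hunion : ltPairs n ∪ (Finset.univ.filter fun x : ZMod n × ZMod n => x.2.val < x.1.val)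
      = Finset.univ.offDiag := by
    ext p
    simp only [ltPairs, mem_union, mem_filter, mem_univ, true_and, mem_offDiag]
    constructor
    · intro h he
      rw [he] at h
      omega
    · intro hne
      have : p.1.val ≠ p.2.val := fun h => hne (ZMod.val_injective n h)
      omega
  have hdisj : Disjoint (ltPairs n)
      (Finset.univ.filter fun x : ZMod n × ZMod n => x.2.val < x.1.val) := by
    rw [Finset.disjoint_left]
    intro p h1 h2
    rw [mem_ltPairs] at h1
    simp only [mem_filter, mem_univ, true_and] at h2
    omega
  have hoff := Finset.offDiag_card (Finset.univ : Finset (ZMod n))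
  have huniv : (Finset.univ : Finset (ZMod n)).card = n := by
    rw [Finset.card_univ, ZMod.card]
  have hcu := Finset.card_union_of_disjoint hdisj
  rw [hunion, hoff, huniv] at hcu
  have hnn : n * n - n = n * (n - 1) := by
    cases n with
    | zero => simp
    | succ m =>
      rw [Nat.add_sub_cancel]
      have : (m + 1) * (m + 1) = (m + 1) * m + (m + 1) := by ring
      omega
  rw [hnn] at hcu
  omega

-- generic embedding of a good family into an initial segment of ℕ
lemma goodFam_embed_range {β : Type*} [DecidableEq β] {A : Finset β} {T : Finset (Finset β)}
    {a : ℕ} (f : β → ℕ) (hf : Function.Injective f) (h : GoodFam A T) (hA : A.card = a) :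
    ∃ T' : Finset (Finset ℕ), GoodFam (Finset.range a) T' ∧ T'.card = T.card := by
  obtain ⟨hg, hc⟩ := h.imageOn (Set.injOn_of_injective hf)
  have hA' : (A.image f).card = a := by
    rw [card_image_of_injective _ hf, hA]
  obtain ⟨T', hT', hcc⟩ := hg.toRange hA'
  exact ⟨T', hT', by rw [hcc, hc]⟩

lemma encode_inj (n : ℕ) [NeZero n] :
    Function.Injective (fun p : ZMod n × ZMod 3 => 3 * p.1.val + p.2.val) := by
  intro p q h
  simp only at h
  have h2 : p.2.val < 3 := ZMod.val_lt p.2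
  have h2' : q.2.val < 3 := ZMod.val_lt q.2
  have e1 : p.1.val = q.1.val := by omega
  have e2 : p.2.val = q.2.val := by omega
  exact Prod.ext (ZMod.val_injective n e1) (ZMod.val_injective 3 e2)

lemma card_val_lt_filter {n : ℕ} [NeZero n] {c : ℕ} (hc : c ≤ n) :
    (Finset.univ.filter fun i : ZMod n => i.val < c).card = c := by
  have himg : (Finset.univ.filter fun i : ZMod n => i.val < c).image ZMod.val
      = Finset.range c := by
    ext m
    simp only [mem_image, mem_filter, mem_univ, true_and, mem_range]
    constructor
    · rintro ⟨i, hi, rfl⟩; exact hi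
    · intro hm
      refine ⟨(m : ZMod n), ?_, ?_⟩ <;> rw [ZMod.val_cast_of_lt (by omega)]
      exact hm
  have := card_image_of_injOn (Set.injOn_of_injective (ZMod.val_injective n)
    (s := ((Finset.univ.filter fun i : ZMod n => i.val < c) : Finset (ZMod n))))
  rw [himg, card_range] at this
  exact this.symm

section C6k
variable (k : ℕ)

def halfG : ZMod (2*k) → ZMod (2*k) :=
  fun m => if m.val % 2 = 0 then ((m.val / 2 : ℕ) : ZMod (2*k))
           else ((k + m.val / 2 : ℕ) : ZMod (2*k))

variable [NeZero (2*k)]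

lemma halfG_val (m : ZMod (2*k)) :
    (m.val % 2 = 0 → (halfG k m).val = m.val / 2) ∧
    (m.val % 2 = 1 → (halfG k m).val = k + m.val / 2) := by
  have hm : m.val < 2*k := ZMod.val_lt m
  constructor
  · intro h
    rw [halfG, if_pos h, ZMod.val_cast_of_lt (by omega)]
  · intro h
    rw [halfG, if_neg (by omega), ZMod.val_cast_of_lt (by omega)]

lemma halfG_inj : Function.Injective (halfG k) := by
  intro a b hab
  have ha := ZMod.val_lt a
  have hb := ZMod.val_lt b
  have hval := congrArg ZMod.val hab
  have hA := halfG_val k a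
  have hB := halfG_val k b
  apply ZMod.val_injective
  rcases Nat.mod_two_eq_zero_or_one a.val with h1 | h1 <;>
    rcases Nat.mod_two_eq_zero_or_one b.val with h2 | h2
  · rw [hA.1 h1, hB.1 h2] at hval; omega
  · rw [hA.1 h1, hB.2 h2] at hval; omega
  · rw [hA.2 h1, hB.1 h2] at hval; omega
  · rw [hA.2 h1, hB.2 h2] at hval; omega

lemma halfG_diag {i : ZMod (2*k)} (hi : i.val < k) :
    ∀ x, halfG k (i + x) = i → x = i := by
  intro x hx
  have hval := congrArg ZMod.val hx
  have hH := halfG_val k (i + x)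
  have hm : (i + x).val < 2*k := ZMod.val_lt (i + x)
  rcases Nat.mod_two_eq_zero_or_one (i + x).val with h1 | h1
  · rw [hH.1 h1] at hval
    -- (i+x).val = 2 * i.val
    have h2 : (i + x).val = 2 * i.val := by omega
    have h3 : i + x = 2 * i := by
      apply ZMod.val_injective
      rw [h2]
      have : ((2 * i.val : ℕ) : ZMod (2*k)) = 2 * i := by
        push_cast [ZMod.natCast_val]
        rw [ZMod.cast_id]
      rw [← this, ZMod.val_cast_of_lt (by omega)]
    have h4 : i + x = i + i := by rw [h3]; exact two_mul i
    exact add_left_cancel h4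
  · rw [hH.2 h1] at hval
    omega

def fam6k : Finset (Finset (ZMod (2*k) × ZMod 3)) :=
  ((Finset.univ.filter fun i : ZMod (2*k) => i.val < k).image t1) ∪
  ((ltPairs (2*k) ×ˢ Finset.univ).image fun x => t3 (halfG k) x.1.1 x.1.2 x.2)

lemma good_fam6k : GoodFam (Finset.univ : Finset (ZMod (2*k) × ZMod 3)) (fam6k k) := by
  constructor
  · intro t ht
    rw [fam6k, mem_union] at ht
    rcases ht with ht | ht <;> rw [mem_image] at ht <;> obtain ⟨x, hx, rfl⟩ := ht
    · exact ⟨subset_univ _, card_t1⟩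
    · refine ⟨subset_univ _, card_t3 ?_⟩
      rw [mem_product, mem_ltPairs] at hx
      intro he
      rw [he] at hx
      omega
  · intro t ht t' ht' hne
    rw [fam6k, mem_union] at ht ht'
    rcases ht with ht | ht <;> rcases ht' with ht' | ht' <;>
      rw [mem_image] at ht ht' <;> obtain ⟨x, hx, rfl⟩ := ht <;> obtain ⟨y, hy, rfl⟩ := ht'
    · exact t1_inter_t1 (fun he => hne (by rw [he]))
    · rw [mem_filter] at hx
      rw [mem_product, mem_ltPairs] at hy
      exact t1_inter_t3 (fun he => by rw [he] at hy; omega) (halfG_diag k hx.2)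
    · rw [inter_comm]
      rw [mem_filter] at hy
      rw [mem_product, mem_ltPairs] at hx
      exact t1_inter_t3 (fun he => by rw [he] at hx; omega) (halfG_diag k hy.2)
    · rw [mem_product, mem_ltPairs] at hx hy
      refine t3_inter (halfG_inj k) hx.1 hy.1 ?_
      intro he
      simp only [Prod.mk.injEq] at he
      exact hne (by rw [he.1, he.2.1, he.2.2])

lemma card_fam6k (hk : 1 ≤ k) : (fam6k k).card = 6*k*k - 2*k := by
  rw [fam6k, card_union_of_disjoint, card_image_of_injOn, card_image_of_injOn]
  · rw [card_val_lt_filter (by omega), card_product, card_ltPairs, card_univ, ZMod.card]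
    obtain ⟨m, rfl⟩ : ∃ m, k = m + 1 := ⟨k - 1, by omega⟩
    rw [show 2*(m+1) - 1 = 2*m+1 from by omega]
    rw [show 2*(m+1) * (2*m+1) = ((m+1) * (2*m+1)) * 2 from by ring,
      Nat.mul_div_cancel _ (by norm_num)]
    have h1 : 6*(m+1)*(m+1) = 6*m*m + 12*m + 6 := by ring
    have h2 : (m+1) * (2*m+1) * 3 = 6*m*m + 9*m + 3 := by ring
    omega
  · -- injectivity of t3 on the product index set
    intro x hx y hy he
    simp only [coe_product, Set.mem_prod, mem_coe, mem_ltPairs] at hx hy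
    have := t3_param_eq (halfG_inj k) hx.1 hy.1 he
    simp only [Prod.mk.injEq] at this
    exact Prod.ext (Prod.ext this.1 this.2.1) this.2.2
  · intro x hx y hy he
    exact t1_param_eq he
  · rw [Finset.disjoint_left]
    intro t ht ht'
    rw [mem_image] at ht ht'
    obtain ⟨x, hx, rfl⟩ := ht
    obtain ⟨y, hy, he⟩ := ht'
    exact t1_ne_t3 he.symm

end C6k

lemma exists_packing_6k (k : ℕ) (hk : 1 ≤ k) :
    ∃ T : Finset (Finset ℕ), GoodFam (Finset.range (6*k)) T ∧ T.card = 6*k*k - 2*k := by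
  haveI : NeZero (2*k) := ⟨by omega⟩
  have hcard : (Finset.univ : Finset (ZMod (2*k) × ZMod 3)).card = 6*k := by
    rw [card_univ, Fintype.card_prod, ZMod.card, ZMod.card]
    ring
  obtain ⟨T', hg, hc⟩ := goodFam_embed_range _ (encode_inj (2*k)) (good_fam6k k) hcard
  exact ⟨T', hg, by rw [hc, card_fam6k k hk]⟩

section C6k2
variable (k : ℕ)

instance : NeZero (2*k+1) := ⟨Nat.succ_ne_zero _⟩

def GB : ZMod ((2*k+1)) → ZMod ((2*k+1)) := fun s => (k+1 : ZMod ((2*k+1))) * s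

lemma two_mul_kp1 : (2*(k+1) : ZMod ((2*k+1))) = 1 := by
  have h : ((2*k+1 : ℕ) : ZMod ((2*k+1))) = 0 := ZMod.natCast_self _
  push_cast at h ⊢
  linear_combination h

lemma GB_inj : Function.Injective (GB k) := by
  intro a b hab
  unfold GB at hab
  have h2 : (2 : ZMod ((2*k+1))) * ((k+1 : ZMod ((2*k+1))) * a) = 2 * ((k+1 : ZMod ((2*k+1))) * b) := by
    rw [hab]
  calc a = 2*(k+1) * a := by rw [two_mul_kp1, one_mul]
    _ = 2 * ((k+1 : ZMod ((2*k+1))) * a) := by ring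
    _ = 2 * ((k+1 : ZMod ((2*k+1))) * b) := h2
    _ = 2*(k+1) * b := by ring
    _ = b := by rw [two_mul_kp1, one_mul]

lemma GB_diag (m : ZMod ((2*k+1))) : ∀ x, GB k (m + x) = m → x = m := by
  intro x hx
  have h1 : m + x = 2 * (GB k (m + x)) := by
    rw [GB]
    calc m + x = 2*(k+1) * (m+x) := by rw [two_mul_kp1, one_mul]
      _ = 2 * ((k+1 : ZMod ((2*k+1))) * (m+x)) := by ring
  rw [hx] at h1
  have h2 : m + x = m + m := by rw [h1]; exact two_mul m
  exact add_left_cancel h2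

lemma GB_zero {s : ZMod ((2*k+1))} (h : GB k s = 0) : s = 0 :=
  GB_inj k (by rw [h, GB, mul_zero])

def famB : Finset (Finset (ZMod ((2*k+1)) × ZMod 3)) :=
  ((Finset.univ.filter fun i : ZMod ((2*k+1)) => i ≠ 0).image t1) ∪
  (((ltPairs ((2*k+1))).image fun x => t3 (GB k) x.1 x.2 0) ∪
   (((ltPairs ((2*k+1))).filter fun x => x.1 + x.2 ≠ 0).image fun x => t3 (GB k) x.1 x.2 1) ∪
   (((ltPairs ((2*k+1))).filter fun x => x.1 ≠ 0).image fun x => t3 (GB k) x.1 x.2 2))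

def ptB : Finset (ZMod ((2*k+1)) × ZMod 3) :=
  Finset.univ.erase ((0 : ZMod ((2*k+1))), (2 : ZMod 3))

lemma mem3_famB {t : Finset (ZMod ((2*k+1)) × ZMod 3)}
    (ht : t ∈ ((ltPairs ((2*k+1))).image fun x => t3 (GB k) x.1 x.2 0) ∪
      (((ltPairs ((2*k+1))).filter fun x => x.1 + x.2 ≠ 0).image fun x => t3 (GB k) x.1 x.2 1) ∪
      (((ltPairs ((2*k+1))).filter fun x => x.1 ≠ 0).image fun x => t3 (GB k) x.1 x.2 2)) :
    ∃ x : ZMod ((2*k+1)) × ZMod ((2*k+1)), ∃ l : ZMod 3,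
      x.1.val < x.2.val ∧ t = t3 (GB k) x.1 x.2 l := by
  rcases mem_union.mp ht with ht | ht
  · rcases mem_union.mp ht with ht | ht
    · obtain ⟨x, hx, rfl⟩ := mem_image.mp ht
      exact ⟨x, 0, mem_ltPairs.mp hx, rfl⟩
    · obtain ⟨x, hx, rfl⟩ := mem_image.mp ht
      exact ⟨x, 1, mem_ltPairs.mp (mem_filter.mp hx).1, rfl⟩
  · obtain ⟨x, hx, rfl⟩ := mem_image.mp ht
    exact ⟨x, 2, mem_ltPairs.mp (mem_filter.mp hx).1, rfl⟩

lemma good_famB : GoodFam (ptB k) (famB k) := by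
  constructor
  · intro t ht
    rcases mem_union.mp ht with ht | ht
    · obtain ⟨i, hi, rfl⟩ := mem_image.mp ht
      rw [mem_filter] at hi
      refine ⟨?_, card_t1⟩
      intro p hp
      rw [ptB, mem_erase]
      refine ⟨?_, mem_univ _⟩
      rw [mem_t1] at hp
      rcases hp with rfl | rfl | rfl
      · intro h; exact (show ((0:ZMod 3) = 2) → False by decide) (congrArg Prod.snd h)
      · intro h; exact (show ((1:ZMod 3) = 2) → False by decide) (congrArg Prod.snd h)
      · intro h; exact hi.2 (congrArg Prod.fst h)
    · -- a type-3 triple; check (0,2) avoidance per case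
      have hcard : ∃ x : ZMod ((2*k+1)) × ZMod ((2*k+1)), ∃ l : ZMod 3,
          x.1.val < x.2.val ∧ t = t3 (GB k) x.1 x.2 l := mem3_famB k ht
      obtain ⟨x, l, hlt, rfl⟩ := hcard
      refine ⟨?_, card_t3 (fun he => by rw [he] at hlt; omega)⟩
      intro p hp
      rw [ptB, mem_erase]
      refine ⟨?_, mem_univ _⟩
      -- need: (0,2) ∉ this triple, using which union component it is in
      rcases mem_union.mp ht with htA | ht'
      rcases mem_union.mp htA with ht' | ht'
      · obtain ⟨y, hy, he⟩ := mem_image.mp ht'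
        have hpar := t3_param_eq (GB_inj k) (mem_ltPairs.mp hy) hlt he
        simp only [Prod.mk.injEq] at hpar
        obtain ⟨e1, e2, e3⟩ := hpar
        rw [mem_t3] at hp
        rcases hp with rfl | rfl | rfl <;> intro hc <;>
          simp only [Prod.mk.injEq] at hc
        · rw [← e3] at hc; exact absurd hc.2 (by decide)
        · rw [← e3] at hc; exact absurd hc.2 (by decide)
        · rw [← e3] at hc; exact absurd hc.2 (by decide)
      · obtain ⟨y, hy, he⟩ := mem_image.mp ht'
        rw [mem_filter] at hy
        have hpar := t3_param_eq (GB_inj k) (mem_ltPairs.mp hy.1) hlt he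
        simp only [Prod.mk.injEq] at hpar
        obtain ⟨e1, e2, e3⟩ := hpar
        rw [mem_t3] at hp
        rcases hp with rfl | rfl | rfl <;> intro hc <;>
          simp only [Prod.mk.injEq] at hc
        · rw [← e3] at hc; exact absurd hc.2 (by decide)
        · rw [← e3] at hc; exact absurd hc.2 (by decide)
        · -- third point (G(i+j), l+1) = (0,2): l = 1 so G(x.1+x.2) = 0
          have hz : GB k (x.1 + x.2) = 0 := hc.1
          have := GB_zero k hz
          rw [← e1, ← e2] at this
          exact hy.2 this
      · obtain ⟨y, hy, he⟩ := mem_image.mp ht'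
        rw [mem_filter] at hy
        have hpar := t3_param_eq (GB_inj k) (mem_ltPairs.mp hy.1) hlt he
        simp only [Prod.mk.injEq] at hpar
        obtain ⟨e1, e2, e3⟩ := hpar
        rw [mem_t3] at hp
        rcases hp with rfl | rfl | rfl <;> intro hc <;>
          simp only [Prod.mk.injEq] at hc
        · rw [← e1] at hc
          exact hy.2 hc.1
        · -- (x.2, l) = (0,2): x.2 = 0 but x.2.val > x.1.val ≥ 0, and x.1 ≠ 0
          have h2 : x.2 = 0 := hc.1
          have h1v := mem_ltPairs.mp hy.1
          rw [← e2] at h2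
          rw [h2, ZMod.val_zero] at h1v
          omega
        · rw [← e3] at hc
          exact absurd hc.2 (by decide)
  · intro t ht t' ht' hne
    rcases mem_union.mp ht with h1 | h1 <;> rcases mem_union.mp ht' with h2 | h2
    · obtain ⟨i, hi, rfl⟩ := mem_image.mp h1
      obtain ⟨i', hi', rfl⟩ := mem_image.mp h2
      exact t1_inter_t1 (fun he => hne (by rw [he]))
    · obtain ⟨i, hi, rfl⟩ := mem_image.mp h1
      obtain ⟨x, l, hlt, rfl⟩ := mem3_famB k h2
      exact t1_inter_t3 (fun he => by rw [he] at hlt; omega) (GB_diag k i)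
    · obtain ⟨i, hi, rfl⟩ := mem_image.mp h2
      obtain ⟨x, l, hlt, rfl⟩ := mem3_famB k h1
      rw [inter_comm]
      exact t1_inter_t3 (fun he => by rw [he] at hlt; omega) (GB_diag k i)
    · obtain ⟨x, l, hlt, rfl⟩ := mem3_famB k h1
      obtain ⟨y, l', hlt', rfl⟩ := mem3_famB k h2
      refine t3_inter (GB_inj k) hlt hlt' ?_
      intro he
      simp only [Prod.mk.injEq] at he
      exact hne (by rw [he.1, he.2.1, he.2.2])

lemma cast_val_eq {n : ℕ} [NeZero n] (a : ZMod n) : ((a.val : ℕ) : ZMod n) = a := by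
  apply ZMod.val_injective
  rw [ZMod.val_cast_of_lt (ZMod.val_lt a)]

lemma card_negpairs : ((ltPairs ((2*k+1))).filter fun x => x.1 + x.2 = 0).card = k := by
  have himg : ((ltPairs ((2*k+1))).filter fun x => x.1 + x.2 = 0)
      = (Finset.Ico 1 (k+1)).image
        (fun m : ℕ => ((m : ZMod ((2*k+1))), -(m : ZMod ((2*k+1))))) := by
    ext p
    simp only [mem_filter, mem_ltPairs, mem_image, mem_Ico]
    constructor
    · rintro ⟨hlt, hsum⟩
      have hp2 : p.2 = -p.1 := by
        have := neg_eq_of_add_eq_zero_left hsum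
        rw [← this, neg_neg]
      have hp1ne : p.1 ≠ 0 := by
        intro h
        rw [h, neg_zero] at hp2
        rw [h, hp2, ZMod.val_zero] at hlt
        omega
      have hnegval : p.2.val = (2*k+1) - p.1.val := by
        rw [hp2, ZMod.neg_val, if_neg hp1ne]
      have hv1 : p.1.val < 2*k+1 := ZMod.val_lt p.1
      have hvne : p.1.val ≠ 0 := fun h => hp1ne ((ZMod.val_eq_zero p.1).mp h)
      refine ⟨p.1.val, ⟨by omega, by omega⟩, ?_⟩
      rw [cast_val_eq]
      exact Prod.ext rfl hp2.symm
    · rintro ⟨m, ⟨hm1, hm2⟩, rfl⟩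
      have hmv : ((m : ZMod ((2*k+1)))).val = m := ZMod.val_cast_of_lt (by omega)
      have hmne : (m : ZMod ((2*k+1))) ≠ 0 := by
        intro h
        rw [h, ZMod.val_zero] at hmv
        omega
      constructor
      · rw [ZMod.neg_val, if_neg hmne, hmv]
        omega
      · ring
  rw [himg, card_image_of_injOn, Nat.card_Ico]
  · omega
  · intro a ha b hb he
    simp only [Prod.mk.injEq] at he
    simp only [coe_Ico, Set.mem_Ico] at ha hb
    have h1 : ((a : ZMod ((2*k+1)))).val = a := ZMod.val_cast_of_lt (by omega)
    have h2 : ((b : ZMod ((2*k+1)))).val = b := ZMod.val_cast_of_lt (by omega)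
    rw [← h1, ← h2, he.1]

lemma card_zerofst : ((ltPairs ((2*k+1))).filter fun x => x.1 = 0).card = 2*k := by
  have himg : ((ltPairs ((2*k+1))).filter fun x => x.1 = 0)
      = (Finset.Ico 1 (2*k+1)).image
        (fun m : ℕ => ((0 : ZMod ((2*k+1))), (m : ZMod ((2*k+1))))) := by
    ext p
    simp only [mem_filter, mem_ltPairs, mem_image, mem_Ico]
    constructor
    · rintro ⟨hlt, hz⟩
      rw [hz, ZMod.val_zero] at hlt
      have hv2 : p.2.val < 2*k+1 := ZMod.val_lt p.2
      refine ⟨p.2.val, ⟨by omega, by omega⟩, ?_⟩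
      rw [cast_val_eq]
      exact Prod.ext hz.symm rfl
    · rintro ⟨m, ⟨hm1, hm2⟩, rfl⟩
      have hmv : ((m : ZMod ((2*k+1)))).val = m := ZMod.val_cast_of_lt (by omega)
      exact ⟨by rw [ZMod.val_zero, hmv]; omega, rfl⟩
  rw [himg, card_image_of_injOn, Nat.card_Ico]
  · omega
  · intro a ha b hb he
    simp only [Prod.mk.injEq] at he
    simp only [coe_Ico, Set.mem_Ico] at ha hb
    have h1 : ((a : ZMod ((2*k+1)))).val = a := ZMod.val_cast_of_lt (by omega)
    have h2 : ((b : ZMod ((2*k+1)))).val = b := ZMod.val_cast_of_lt (by omega)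
    rw [← h1, ← h2, he.2]

lemma card_famB : (famB k).card = 6*k*k + 2*k := by
  have hinj3 : ∀ (l : ZMod 3) (S : Finset (ZMod (2*k+1) × ZMod (2*k+1))),
      S ⊆ ltPairs (2*k+1) →
      Set.InjOn (fun x : ZMod (2*k+1) × ZMod (2*k+1) => t3 (GB k) x.1 x.2 l) S := by
    intro l S hS x hx y hy he
    have hx' := mem_ltPairs.mp (hS hx)
    have hy' := mem_ltPairs.mp (hS hy)
    have := t3_param_eq (GB_inj k) hx' hy' he
    simp only [Prod.mk.injEq] at this
    exact Prod.ext this.1 this.2.1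
  have hne3 : ∀ (l l' : ZMod 3), l ≠ l' →
      ∀ (S S' : Finset (ZMod (2*k+1) × ZMod (2*k+1))), S ⊆ ltPairs (2*k+1) →
      S' ⊆ ltPairs (2*k+1) →
      Disjoint (S.image fun x => t3 (GB k) x.1 x.2 l)
        (S'.image fun x => t3 (GB k) x.1 x.2 l') := by
    intro l l' hll S S' hS hS'
    rw [Finset.disjoint_left]
    intro t ht ht'
    obtain ⟨x, hx, rfl⟩ := mem_image.mp ht
    obtain ⟨y, hy, he⟩ := mem_image.mp ht'
    have := t3_param_eq (GB_inj k) (mem_ltPairs.mp (hS' hy)) (mem_ltPairs.mp (hS hx)) he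
    simp only [Prod.mk.injEq] at this
    exact hll (this.2.2 ▸ rfl)
  have hd1 : ∀ (S : Finset (ZMod (2*k+1) × ZMod (2*k+1))) (l : ZMod 3)
      (I : Finset (ZMod (2*k+1))),
      Disjoint (I.image t1) (S.image fun x => t3 (GB k) x.1 x.2 l) := by
    intro S l I
    rw [Finset.disjoint_left]
    intro t ht ht'
    obtain ⟨i, hi, rfl⟩ := mem_image.mp ht
    obtain ⟨x, hx, he⟩ := mem_image.mp ht'
    exact t1_ne_t3 he.symm
  have hfil1 : ((ltPairs (2*k+1)).filter fun x => x.1 + x.2 ≠ 0).card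
      = (ltPairs (2*k+1)).card - k := by
    have h0 := Finset.card_filter_add_card_filter_not
      (s := ltPairs (2*k+1)) (p := fun x => x.1 + x.2 = 0)
    have hk1 := card_negpairs k
    simp only [ne_eq] at h0 ⊢
    omega
  have hfil2 : ((ltPairs (2*k+1)).filter fun x => x.1 ≠ 0).card
      = (ltPairs (2*k+1)).card - 2*k := by
    have h0 := Finset.card_filter_add_card_filter_not
      (s := ltPairs (2*k+1)) (p := fun x => x.1 = 0)
    have hk1 := card_zerofst k
    simp only [ne_eq] at h0 ⊢
    omega
  have hcard1 : ((Finset.univ.filter fun i : ZMod (2*k+1) => i ≠ 0)).card = 2*k := by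
    have he : (Finset.univ.filter fun i : ZMod (2*k+1) => i ≠ 0)
        = Finset.univ.erase 0 := by
      ext i
      simp [mem_erase, and_comm]
    rw [he, card_erase_of_mem (mem_univ _), card_univ, ZMod.card]
    omega
  have hP : (ltPairs (2*k+1)).card = k * (2*k+1) := by
    rw [card_ltPairs]
    rw [show (2*k+1) - 1 = 2*k from by omega,
      show (2*k+1) * (2*k) = (k * (2*k+1)) * 2 from by ring,
      Nat.mul_div_cancel _ (by norm_num)]
  -- individual card computations
  have cB1 : ((Finset.univ.filter fun i : ZMod (2*k+1) => i ≠ 0).image t1).card = 2*k := by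
    rw [card_image_of_injOn (fun x hx y hy he => t1_param_eq he), hcard1]
  have cB2 : (((ltPairs (2*k+1)).image fun x => t3 (GB k) x.1 x.2 0)).card
      = k * (2*k+1) := by
    rw [card_image_of_injOn (hinj3 0 _ (Finset.Subset.refl _)), hP]
  have cB3 : ((((ltPairs (2*k+1)).filter fun x => x.1 + x.2 ≠ 0).image
      fun x => t3 (GB k) x.1 x.2 1)).card = k * (2*k+1) - k := by
    rw [card_image_of_injOn (hinj3 1 _ (filter_subset _ _)), hfil1, hP]
  have cB4 : ((((ltPairs (2*k+1)).filter fun x => x.1 ≠ 0).image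
      fun x => t3 (GB k) x.1 x.2 2)).card = k * (2*k+1) - 2*k := by
    rw [card_image_of_injOn (hinj3 2 _ (filter_subset _ _)), hfil2, hP]
  have hdA : Disjoint ((ltPairs (2*k+1)).image fun x => t3 (GB k) x.1 x.2 0)
      (((ltPairs (2*k+1)).filter fun x => x.1 + x.2 ≠ 0).image
        fun x => t3 (GB k) x.1 x.2 1) :=
    hne3 0 1 (by decide) _ _ (Finset.Subset.refl _) (filter_subset _ _)
  have hdB : Disjoint (((ltPairs (2*k+1)).image fun x => t3 (GB k) x.1 x.2 0) ∪
      (((ltPairs (2*k+1)).filter fun x => x.1 + x.2 ≠ 0).image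
        fun x => t3 (GB k) x.1 x.2 1))
      ((((ltPairs (2*k+1)).filter fun x => x.1 ≠ 0).image
        fun x => t3 (GB k) x.1 x.2 2)) := by
    rw [Finset.disjoint_union_left]
    exact ⟨hne3 0 2 (by decide) _ _ (Finset.Subset.refl _) (filter_subset _ _),
      hne3 1 2 (by decide) _ _ (filter_subset _ _) (filter_subset _ _)⟩
  have hdC : Disjoint ((Finset.univ.filter fun i : ZMod (2*k+1) => i ≠ 0).image t1)
      ((((ltPairs (2*k+1)).image fun x => t3 (GB k) x.1 x.2 0) ∪
        (((ltPairs (2*k+1)).filter fun x => x.1 + x.2 ≠ 0).image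
          fun x => t3 (GB k) x.1 x.2 1)) ∪
       ((((ltPairs (2*k+1)).filter fun x => x.1 ≠ 0).image
          fun x => t3 (GB k) x.1 x.2 2))) := by
    rw [Finset.disjoint_union_right, Finset.disjoint_union_right]
    exact ⟨⟨hd1 _ _ _, hd1 _ _ _⟩, hd1 _ _ _⟩
  rw [famB, card_union_of_disjoint hdC, card_union_of_disjoint hdB,
    card_union_of_disjoint hdA]
  rw [cB1, cB2, cB3, cB4]
  have hkk : k * (2*k+1) = 2*(k*k) + k := by ring
  have h6 : 6*k*k = 6*(k*k) := by ring
  have hk2 : k ≤ k*k := by nlinarith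
  generalize hY : k*k = Y at *
  generalize hX : k*(2*k+1) = X at *
  omega

lemma card_ptB : (ptB k).card = 6*k + 2 := by
  rw [ptB, card_erase_of_mem (mem_univ _), card_univ, Fintype.card_prod, ZMod.card, ZMod.card]
  omega

end C6k2

lemma exists_packing_6k2 (k : ℕ) :
    ∃ T : Finset (Finset ℕ), GoodFam (Finset.range (6*k+2)) T ∧ T.card = 6*k*k + 2*k := by
  obtain ⟨T', hg, hc⟩ := goodFam_embed_range _ (encode_inj ((2*k+1))) (good_famB k)
    (card_ptB k)
  exact ⟨T', hg, by rw [hc, card_famB k]⟩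

section C6k4
variable (k : ℕ)

def piF : ZMod (2*k+1) → ZMod (2*k+1) :=
  fun m => if m = 0 then 0 else if m = -1 then 1 else m + 1

lemma one_ne_zero_z (hk : 1 ≤ k) : (1 : ZMod (2*k+1)) ≠ 0 := by
  intro h
  have h1 : ((1:ℕ) : ZMod (2*k+1)).val = 1 := ZMod.val_cast_of_lt (by omega)
  rw [Nat.cast_one, h, ZMod.val_zero] at h1
  omega

lemma piF_inj : Function.Injective (piF k) := by
  rcases Nat.eq_zero_or_pos k with hk | hk
  · subst hk
    intro a b _
    apply ZMod.val_injective
    have ha := ZMod.val_lt a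
    have hb := ZMod.val_lt b
    omega
  · intro a b hab
    have h10 := one_ne_zero_z k hk
    unfold piF at hab
    by_cases ha0 : a = 0 <;> by_cases hb0 : b = 0
    · rw [ha0, hb0]
    · exfalso
      rw [if_pos ha0, if_neg hb0] at hab
      by_cases hb1 : b = -1
      · rw [if_pos hb1] at hab; exact h10 hab.symm
      · rw [if_neg hb1] at hab
        exact hb1 (eq_neg_of_add_eq_zero_left hab.symm)
    · exfalso
      rw [if_neg ha0, if_pos hb0] at hab
      by_cases ha1 : a = -1
      · rw [if_pos ha1] at hab; exact h10 hab
      · rw [if_neg ha1] at hab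
        exact ha1 (eq_neg_of_add_eq_zero_left hab)
    · rw [if_neg ha0, if_neg hb0] at hab
      by_cases ha1 : a = -1 <;> by_cases hb1 : b = -1
      · rw [ha1, hb1]
      · exfalso
        rw [if_pos ha1, if_neg hb1] at hab
        have h2 : (0 : ZMod (2*k+1)) + 1 = b + 1 := by rw [zero_add]; exact hab
        exact hb0 (add_right_cancel h2).symm
      · exfalso
        rw [if_neg ha1, if_pos hb1] at hab
        have h2 : a + 1 = (0 : ZMod (2*k+1)) + 1 := by rw [zero_add]; exact hab
        exact ha0 (add_right_cancel h2)
      · rw [if_neg ha1, if_neg hb1] at hab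
        exact add_right_cancel hab

lemma piF_zero : piF k 0 = 0 := by rw [piF]; simp

lemma piF_parity {x : ZMod (2*k+1)} (hx0 : x ≠ 0) (hxe : x.val % 2 = 0) :
    (piF k x).val % 2 = 1 := by
  rcases Nat.eq_zero_or_pos k with hk | hk
  · exfalso
    subst hk
    apply hx0
    apply ZMod.val_injective
    rw [ZMod.val_zero]
    have := ZMod.val_lt x
    omega
  rw [piF, if_neg hx0]
  have hone : (1 : ZMod (2*k+1)).val = 1 := by
    rw [ZMod.val_one_eq_one_mod, Nat.mod_eq_of_lt (by omega)]
  by_cases hm : x = -1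
  · rw [if_pos hm, hone]
  · rw [if_neg hm]
    have hv : x.val < 2*k+1 := ZMod.val_lt x
    have hvne : x.val ≠ 2*k := by
      intro h
      apply hm
      apply ZMod.val_injective
      rw [h, ZMod.neg_val, if_neg (one_ne_zero_z k hk), hone]
      omega
    have hstep : (x + 1).val = x.val + 1 := by
      have hc : x + 1 = ((x.val + 1 : ℕ) : ZMod (2*k+1)) := by
        rw [Nat.cast_add, Nat.cast_one, cast_val_eq]
      rw [hc, ZMod.val_cast_of_lt (by omega)]
    rw [hstep]
    omega

def GC : ZMod (2*k+1) → ZMod (2*k+1) := fun s => piF k (GB k s)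

lemma GC_inj : Function.Injective (GC k) := fun a b h => GB_inj k (piF_inj k h)

lemma GB_half (x : ZMod (2*k+1)) : GB k (x + x) = x := by
  unfold GB
  calc (k+1 : ZMod (2*k+1)) * (x + x) = 2*(k+1) * x := by ring
    _ = x := by rw [two_mul_kp1, one_mul]

lemma GC_half (x : ZMod (2*k+1)) : GC k (x + x) = piF k x := by
  rw [GC, GB_half]

def edgeIdx : Finset (ZMod (2*k+1) × ZMod 3) :=
  ({((0 : ZMod (2*k+1)), (0 : ZMod 3))} : Finset (ZMod (2*k+1) × ZMod 3)) ∪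
  ((Finset.univ.filter fun x : ZMod (2*k+1) => x.val % 2 = 0 ∧ x ≠ 0) ×ˢ Finset.univ)

def eTri (x : ZMod (2*k+1) × ZMod 3) : Finset (Option (ZMod (2*k+1) × ZMod 3)) :=
  {none, some (x.1, x.2), some (GC k (x.1 + x.1), x.2 + 1)}

lemma mem_eTri {x : ZMod (2*k+1) × ZMod 3} {p : Option (ZMod (2*k+1) × ZMod 3)} :
    p ∈ eTri k x ↔ p = none ∨ p = some (x.1, x.2) ∨ p = some (GC k (x.1 + x.1), x.2 + 1) := by
  simp [eTri]

lemma card_eTri (x : ZMod (2*k+1) × ZMod 3) : (eTri k x).card = 3 := by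
  rw [eTri, card_insert_of_notMem, card_insert_of_notMem, card_singleton]
  · simp only [mem_singleton, Option.some.injEq, Prod.mk.injEq, not_and]
    intro _
    exact (zmod3_ne1 x.2).symm
  · simp

-- key: x in edgeIdx has even val (or is zero)
lemma edgeIdx_even {x : ZMod (2*k+1) × ZMod 3} (hx : x ∈ edgeIdx k) :
    x.1.val % 2 = 0 := by
  rw [edgeIdx, mem_union] at hx
  rcases hx with hx | hx
  · rw [mem_singleton] at hx
    rw [hx, ZMod.val_zero]
  · rw [mem_product, mem_filter] at hx
    exact hx.1.2.1

lemma edgeIdx_zero {x : ZMod (2*k+1) × ZMod 3} (hx : x ∈ edgeIdx k) (hx1 : x.1 = 0) :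
    x = (0, 0) := by
  rw [edgeIdx, mem_union] at hx
  rcases hx with hx | hx
  · exact mem_singleton.mp hx
  · rw [mem_product, mem_filter] at hx
    exact absurd hx1 hx.1.2.2

-- distinct edge triples intersect only in `none`
lemma eTri_inter {x y : ZMod (2*k+1) × ZMod 3} (hx : x ∈ edgeIdx k) (hy : y ∈ edgeIdx k)
    (hne : x ≠ y) : (eTri k x ∩ eTri k y).card ≤ 1 := by
  rw [card_le_one]
  intro p hp q hq
  have key : ∀ r, r ∈ eTri k x ∩ eTri k y → r = none := by
    intro r hr
    rw [mem_inter, mem_eTri, mem_eTri] at hr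
    obtain ⟨h1, h2⟩ := hr
    rcases h1 with rfl | h1 | h1
    · rfl
    · -- r = some (x.1, x.2)
      exfalso
      rcases h2 with h2 | h2 | h2
      · exact absurd (h1.symm.trans h2) (by simp)
      · have := h1.symm.trans h2
        simp only [Option.some.injEq] at this
        exact hne (by
          rw [Prod.ext_iff] at this
          exact Prod.ext this.1 this.2)
      · have := h1.symm.trans h2
        rw [GC_half] at this
        simp only [Option.some.injEq, Prod.mk.injEq] at this
        by_cases hy1 : y.1 = 0
        · have hyz := edgeIdx_zero k hy hy1
          have hx1 : x.1 = 0 := by rw [this.1, hy1, piF_zero]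
          have hxz := edgeIdx_zero k hx hx1
          have h22 : x.2 = y.2 + 1 := this.2
          have ex : x.2 = 0 := by rw [hxz]
          have ey : y.2 = 0 := by rw [hyz]
          rw [ex, ey] at h22
          exact (by decide : ((0:ZMod 3) = 0 + 1) → False) h22
        · have hodd := piF_parity k hy1 (edgeIdx_even k hy)
          have hevn := edgeIdx_even k hx
          rw [← this.1] at hodd
          omega
    · -- r = some (GC (x.1+x.1), x.2+1)
      exfalso
      rcases h2 with h2 | h2 | h2
      · exact absurd (h1.symm.trans h2) (by simp)
      · have := h1.symm.trans h2
        rw [GC_half] at this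
        simp only [Option.some.injEq, Prod.mk.injEq] at this
        by_cases hx1 : x.1 = 0
        · have hxz := edgeIdx_zero k hx hx1
          have hy1 : y.1 = 0 := by rw [← this.1, hx1, piF_zero]
          have hyz := edgeIdx_zero k hy hy1
          have h22 : x.2 + 1 = y.2 := this.2
          have ex : x.2 = 0 := by rw [hxz]
          have ey : y.2 = 0 := by rw [hyz]
          rw [ex, ey] at h22
          exact (by decide : ((0:ZMod 3) + 1 = 0) → False) h22
        · have hodd := piF_parity k hx1 (edgeIdx_even k hx)
          have hevn := edgeIdx_even k hy
          rw [this.1] at hodd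
          omega
      · have := h1.symm.trans h2
        rw [GC_half, GC_half] at this
        simp only [Option.some.injEq, Prod.mk.injEq] at this
        have e1 : x.1 = y.1 := piF_inj k this.1
        have e2 : x.2 = y.2 := by
          have := this.2
          exact add_right_cancel this
        exact hne (Prod.ext e1 e2)
  rw [key p hp, key q hq]

-- an edge triple and a (some-mapped) type-3 triple intersect in at most one point
lemma eTri_inter_t3 {x : ZMod (2*k+1) × ZMod 3} {i j : ZMod (2*k+1)} {l : ZMod 3}
    (hij : i.val < j.val) :
    (eTri k x ∩ (t3 (GC k) i j l).image some).card ≤ 1 := by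
  rw [card_le_one]
  intro p hp q hq
  by_contra hpq
  -- both endpoints of the edge lie in the t3 triple
  have hmem : ∀ r, r ∈ eTri k x ∩ (t3 (GC k) i j l).image some →
      (r = some (x.1, x.2) ∨ r = some (GC k (x.1 + x.1), x.2 + 1)) ∧
      ∃ u ∈ t3 (GC k) i j l, r = some u := by
    intro r hr
    rw [mem_inter, mem_eTri] at hr
    obtain ⟨h1, h2⟩ := hr
    rw [mem_image] at h2
    obtain ⟨u, hu, rfl⟩ := h2
    rcases h1 with h1 | h1 | h1
    · exact absurd h1 (by simp)
    · exact ⟨Or.inl h1, u, hu, rfl⟩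
    · exact ⟨Or.inr h1, u, hu, rfl⟩
  have hP := hmem p hp
  have hQ := hmem q hq
  -- p ≠ q, both in the two-element set {A, B}; so A and B are both in (t3).image some
  have hA : some ((x.1, x.2) : ZMod (2*k+1) × ZMod 3) ∈ (t3 (GC k) i j l).image some ∧
      some ((GC k (x.1 + x.1), x.2 + 1) : ZMod (2*k+1) × ZMod 3) ∈ (t3 (GC k) i j l).image some := by
    rcases hP.1 with e1 | e1 <;> rcases hQ.1 with e2 | e2
    · exact absurd (e1.trans e2.symm) hpq
    · constructor
      · rw [← e1]; exact (mem_inter.mp hp).2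
      · rw [← e2]; exact (mem_inter.mp hq).2
    · constructor
      · rw [← e2]; exact (mem_inter.mp hq).2
      · rw [← e1]; exact (mem_inter.mp hp).2
    · exact absurd (e1.trans e2.symm) hpq
  have hA1 : ((x.1, x.2) : ZMod (2*k+1) × ZMod 3) ∈ t3 (GC k) i j l := by
    obtain ⟨u, hu, he⟩ := mem_image.mp hA.1
    simp only [Option.some.injEq] at he
    rwa [he] at hu
  have hA2 : ((GC k (x.1 + x.1), x.2 + 1) : ZMod (2*k+1) × ZMod 3) ∈ t3 (GC k) i j l := by
    obtain ⟨u, hu, he⟩ := mem_image.mp hA.2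
    simp only [Option.some.injEq] at he
    rwa [he] at hu
  -- now derive a contradiction
  rw [mem_t3] at hA1 hA2
  have hijne : i ≠ j := fun h => by rw [h] at hij; omega
  rcases hA1 with h1 | h1 | h1 <;> simp only [Prod.mk.injEq] at h1
  · -- x = (i, l)
    rcases hA2 with h2 | h2 | h2 <;> simp only [Prod.mk.injEq] at h2
    · rw [h1.2] at h2; exact (zmod3_ne1 l) h2.2
    · rw [h1.2] at h2; exact (zmod3_ne1 l) h2.2
    · -- GC(2x.1) = GC(i+j): i + j = x.1 + x.1 = i + i → j = i
      have := GC_inj k (h2.1.symm : GC k (i + j) = GC k (x.1 + x.1))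
      rw [h1.1] at this
      exact hijne (add_left_cancel this).symm
  · -- x = (j, l)
    rcases hA2 with h2 | h2 | h2 <;> simp only [Prod.mk.injEq] at h2
    · rw [h1.2] at h2; exact (zmod3_ne1 l) h2.2
    · rw [h1.2] at h2; exact (zmod3_ne1 l) h2.2
    · have := GC_inj k (h2.1.symm : GC k (i + j) = GC k (x.1 + x.1))
      rw [h1.1] at this
      have h3 : j + i = j + j := by rw [add_comm j i]; exact this
      exact hijne (add_left_cancel h3)
  · -- x = (GC(i+j), l+1): then second point has column l+2
    rcases hA2 with h2 | h2 | h2 <;> simp only [Prod.mk.injEq] at h2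
    · rw [h1.2] at h2
      exact (zmod3_ne2 l) (by linear_combination h2.2)
    · rw [h1.2] at h2
      exact (zmod3_ne2 l) (by linear_combination h2.2)
    · rw [h1.2] at h2
      have := h2.2
      exact (zmod3_ne1 l) (add_right_cancel (a := l + 1) (b := (1:ZMod 3)) (c := l) (by linear_combination this))

def famC : Finset (Finset (Option (ZMod (2*k+1) × ZMod 3))) :=
  ((ltPairs (2*k+1) ×ˢ (Finset.univ : Finset (ZMod 3))).image
      fun x => (t3 (GC k) x.1.1 x.1.2 x.2).image some) ∪
  ((edgeIdx k).image (eTri k))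

lemma good_famC : GoodFam (Finset.univ : Finset (Option (ZMod (2*k+1) × ZMod 3))) (famC k) := by
  constructor
  · intro t ht
    rw [famC, mem_union] at ht
    rcases ht with ht | ht <;> obtain ⟨x, hx, rfl⟩ := mem_image.mp ht
    · refine ⟨subset_univ _, ?_⟩
      rw [card_image_of_injective _ (Option.some_injective _)]
      rw [mem_product, mem_ltPairs] at hx
      exact card_t3 (fun he => by rw [he] at hx; omega)
    · exact ⟨subset_univ _, card_eTri k x⟩
  · intro t ht t' ht' hne
    rw [famC, mem_union] at ht ht'
    rcases ht with ht | ht <;> rcases ht' with ht' | ht' <;>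
      obtain ⟨x, hx, rfl⟩ := mem_image.mp ht <;> obtain ⟨y, hy, rfl⟩ := mem_image.mp ht'
    · rw [mem_product, mem_ltPairs] at hx hy
      rw [← Finset.image_inter _ _ (Option.some_injective _),
        card_image_of_injective _ (Option.some_injective _)]
      refine t3_inter (GC_inj k) hx.1 hy.1 ?_
      intro he
      simp only [Prod.mk.injEq] at he
      exact hne (by rw [he.1, he.2.1, he.2.2])
    · rw [inter_comm]
      rw [mem_product, mem_ltPairs] at hx
      exact eTri_inter_t3 k hx.1
    · rw [mem_product, mem_ltPairs] at hy
      exact eTri_inter_t3 k hy.1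
    · exact eTri_inter k hx hy (fun he => hne (by rw [he]))

lemma card_evenfilter :
    (Finset.univ.filter fun x : ZMod (2*k+1) => x.val % 2 = 0 ∧ x ≠ 0).card = k := by
  have himg : (Finset.univ.filter fun x : ZMod (2*k+1) => x.val % 2 = 0 ∧ x ≠ 0)
      = (Finset.Ico 1 (k+1)).image (fun m : ℕ => ((2*m : ℕ) : ZMod (2*k+1))) := by
    ext x
    simp only [mem_filter, mem_univ, true_and, mem_image, mem_Ico]
    constructor
    · rintro ⟨hev, hnz⟩
      have hv : x.val < 2*k+1 := ZMod.val_lt x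
      have hvnz : x.val ≠ 0 := fun h => hnz ((ZMod.val_eq_zero x).mp h)
      refine ⟨x.val / 2, ⟨by omega, by omega⟩, ?_⟩
      rw [show 2 * (x.val / 2) = x.val from by omega, cast_val_eq]
    · rintro ⟨m, ⟨hm1, hm2⟩, rfl⟩
      have hmv : ((2*m : ℕ) : ZMod (2*k+1)).val = 2*m := ZMod.val_cast_of_lt (by omega)
      constructor
      · rw [hmv]; omega
      · intro h
        rw [h, ZMod.val_zero] at hmv
        omega
  rw [himg, card_image_of_injOn, Nat.card_Ico]
  · omega
  · intro a ha b hb he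
    simp only [coe_Ico, Set.mem_Ico] at ha hb
    have h1 : ((2*a : ℕ) : ZMod (2*k+1)).val = 2*a := ZMod.val_cast_of_lt (by omega)
    have h2 : ((2*b : ℕ) : ZMod (2*k+1)).val = 2*b := ZMod.val_cast_of_lt (by omega)
    have h3 := congrArg ZMod.val he
    simp only at h3
    rw [h1, h2] at h3
    omega

lemma card_edgeIdx : (edgeIdx k).card = 3*k + 1 := by
  rw [edgeIdx, card_union_of_disjoint]
  · rw [card_singleton, card_product, card_evenfilter, card_univ, ZMod.card]
    ring
  · rw [Finset.disjoint_left]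
    intro p hp hp'
    rw [mem_singleton] at hp
    rw [mem_product, mem_filter] at hp'
    rw [hp] at hp'
    exact hp'.1.2.2 rfl

lemma card_famC : (famC k).card = 6*k*k + 6*k + 1 := by
  have hP : (ltPairs (2*k+1)).card = k * (2*k+1) := by
    rw [card_ltPairs]
    rw [show (2*k+1) - 1 = 2*k from by omega,
      show (2*k+1) * (2*k) = (k * (2*k+1)) * 2 from by ring,
      Nat.mul_div_cancel _ (by norm_num)]
  have c1 : ((ltPairs (2*k+1) ×ˢ (Finset.univ : Finset (ZMod 3))).image
      (fun x => (t3 (GC k) x.1.1 x.1.2 x.2).image some)).card = k * (2*k+1) * 3 := by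
    rw [card_image_of_injOn, card_product, hP, card_univ, ZMod.card]
    intro x hx y hy he
    simp only [coe_product, Set.mem_prod, mem_coe, mem_ltPairs] at hx hy
    have he' : t3 (GC k) x.1.1 x.1.2 x.2 = t3 (GC k) y.1.1 y.1.2 y.2 := by
      apply Finset.image_injective (Option.some_injective _)
      exact he
    have := t3_param_eq (GC_inj k) hx.1 hy.1 he'
    simp only [Prod.mk.injEq] at this
    exact Prod.ext (Prod.ext this.1 this.2.1) this.2.2
  have c2 : ((edgeIdx k).image (eTri k)).card = 3*k + 1 := by
    rw [card_image_of_injOn, card_edgeIdx]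
    intro x hx y hy he
    by_contra hne
    have h1 := eTri_inter k (by exact_mod_cast hx) (by exact_mod_cast hy) hne
    rw [he, inter_self, card_eTri] at h1
    omega
  have hd : Disjoint ((ltPairs (2*k+1) ×ˢ (Finset.univ : Finset (ZMod 3))).image
      (fun x => (t3 (GC k) x.1.1 x.1.2 x.2).image some)) ((edgeIdx k).image (eTri k)) := by
    rw [Finset.disjoint_left]
    intro t ht ht'
    obtain ⟨x, hx, rfl⟩ := mem_image.mp ht
    obtain ⟨y, hy, he⟩ := mem_image.mp ht'
    have hn : none ∈ eTri k y := by rw [mem_eTri]; exact Or.inl rfl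
    rw [he] at hn
    obtain ⟨u, _, hu⟩ := mem_image.mp hn
    exact (by simp : ¬(some u = none)) hu
  rw [famC, card_union_of_disjoint hd, c1, c2]
  have : k * (2*k+1) * 3 = 6*(k*k) + 3*k := by ring
  have h6 : 6*k*k = 6*(k*k) := by ring
  omega

end C6k4

lemma encodeO_inj (n : ℕ) [NeZero n] :
    Function.Injective (fun p : Option (ZMod n × ZMod 3) =>
      Option.elim p 0 (fun q => 3 * q.1.val + q.2.val + 1)) := by
  intro p q h
  simp only at h
  match p, q with
  | none, none => rfl
  | none, some q => simp at h
  | some p, none => simp at h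
  | some p, some q =>
    simp only [Option.elim] at h
    have h2 : p.2.val < 3 := ZMod.val_lt p.2
    have h2' : q.2.val < 3 := ZMod.val_lt q.2
    have e1 : p.1.val = q.1.val := by omega
    have e2 : p.2.val = q.2.val := by omega
    rw [Prod.ext (ZMod.val_injective n e1) (ZMod.val_injective 3 e2)]

lemma exists_packing_6k4 (k : ℕ) :
    ∃ T : Finset (Finset ℕ), GoodFam (Finset.range (6*k+4)) T ∧ T.card = 6*k*k + 6*k + 1 := by
  have hcard : (Finset.univ : Finset (Option (ZMod (2*k+1) × ZMod 3))).card = 6*k+4 := by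
    rw [card_univ, Fintype.card_option, Fintype.card_prod, ZMod.card, ZMod.card]
    ring
  obtain ⟨T', hg, hc⟩ := goodFam_embed_range _ (encodeO_inj (2*k+1)) (good_famC k) hcard
  exact ⟨T', hg, by rw [hc, card_famC k]⟩

lemma target_6k (k : ℕ) (hk : 1 ≤ k) : 6*k * ((6*k - 1) / 2) / 3 = 6*k*k - 2*k := by
  obtain ⟨m, rfl⟩ : ∃ m, k = m + 1 := ⟨k - 1, by omega⟩
  rw [show (6*(m+1) - 1)/2 = 3*m + 2 from by omega]
  rw [show 6*(m+1) * (3*m+2) = 3 * (6*(m*m) + 10*m + 4) from by ring]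
  rw [Nat.mul_div_cancel_left _ (by norm_num : 0 < 3)]
  have h1 : 6*(m+1)*(m+1) = 6*(m*m) + 12*m + 6 := by ring
  omega

lemma target_6k2 (k : ℕ) : (6*k+2) * ((6*k+2 - 1) / 2) / 3 = 6*k*k + 2*k := by
  rw [show (6*k+2 - 1)/2 = 3*k from by omega]
  rw [show (6*k+2) * (3*k) = 3 * (6*(k*k) + 2*k) from by ring]
  rw [Nat.mul_div_cancel_left _ (by norm_num : 0 < 3)]
  have h1 : 6*k*k = 6*(k*k) := by ring
  omega

lemma target_6k4 (k : ℕ) : (6*k+4) * ((6*k+4 - 1) / 2) / 3 = 6*k*k + 6*k + 1 := by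
  rw [show (6*k+4 - 1)/2 = 3*k+1 from by omega]
  rw [show (6*k+4) * (3*k+1) = 3 * (6*(k*k) + 6*k + 1) + 1 from by ring]
  have h1 : 6*k*k = 6*(k*k) := by ring
  omega

theorem packing_max_even (a : ℕ) (ha : 0 < a) (hEven : Even a) :
    IsGreatest {n | ∃ T : Finset (Finset ℕ), IsPacking (Finset.range a) T ∧ T.card = n}
      (a * ((a - 1) / 2) / 3) := by
  constructor
  · have h2 : a % 2 = 0 := Nat.even_iff.mp hEven
    have h6 : a % 6 = 0 ∨ a % 6 = 2 ∨ a % 6 = 4 := by omega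
    rcases h6 with h6 | h6 | h6
    · obtain ⟨k, hk, rfl⟩ : ∃ k, 1 ≤ k ∧ a = 6*k := ⟨a/6, by omega, by omega⟩
      obtain ⟨T, hg, hc⟩ := exists_packing_6k k hk
      exact ⟨T, hg.isPacking, by rw [hc, ← target_6k k hk]⟩
    · obtain ⟨k, rfl⟩ : ∃ k, a = 6*k + 2 := ⟨a/6, by omega⟩
      obtain ⟨T, hg, hc⟩ := exists_packing_6k2 k
      exact ⟨T, hg.isPacking, by rw [hc, ← target_6k2 k]⟩
    · obtain ⟨k, rfl⟩ : ∃ k, a = 6*k + 4 := ⟨a/6, by omega⟩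
      obtain ⟨T, hg, hc⟩ := exists_packing_6k4 k
      exact ⟨T, hg.isPacking, by rw [hc, ← target_6k4 k]⟩
  · rintro n ⟨T, hp, rfl⟩
    exact packing_card_le hp
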